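/- arXiv:2004.12824 — 2 statements merged into one kernel-verified Lean document; each statement's English description precedes it below -/
import Mathlib

section
/- For d ≥ 2 and W ∈ [1/d, 1], the function P_g(W,d) = (√W + √((d-1)(1-W)))²/d is monotonically decreasing in W. -/
/-- For d ≥ 2, P_g(W,d) = (√W + √((d-1)(1-W)))²/d is monotonically decreasing
in W on [1/d, 1]. -/
theorem stmt_1 (d : ℕ) (hd : 2 ≤ d) :
    AntitoneOn (fun W : ℝ => (Real.sqrt W + Real.sqrt (((d : ℝ) - 1) * (1 - W)))^2 / d)
      (Set.Icc (1 / (d : ℝ)) 1) := by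
  set D : ℝ := (d : ℝ) with hDdef
  have hD2 : (2 : ℝ) ≤ D := by rw [hDdef]; exact_mod_cast hd
  have hD0 : (0 : ℝ) < D := by linarith
  have hD1 : (0 : ℝ) ≤ D - 1 := by linarith
  -- key pointwise lemma
  have key : ∀ x : ℝ, 1 / D ≤ x → x ≤ 1 →
      Real.sqrt (1 - x) ≤ Real.sqrt (D - 1) * Real.sqrt x := by
    intro x hx1 hx2
    rw [← Real.sqrt_mul hD1]
    apply Real.sqrt_le_sqrt
    have : 1 ≤ D * x := by
      rw [div_le_iff₀ hD0] at hx1; linarith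
    nlinarith
  intro a ha b hb hab
  obtain ⟨ha1, ha2⟩ := ha
  obtain ⟨hb1, hb2⟩ := hb
  have ha0 : 0 ≤ a := le_trans (by positivity) ha1
  have hb0 : 0 ≤ b := le_trans (by positivity) hb1
  have h1a : 0 ≤ 1 - a := by linarith
  have h1b : 0 ≤ 1 - b := by linarith
  simp only
  rw [Real.sqrt_mul hD1, Real.sqrt_mul hD1]
  -- show the inner sums compare
  have hg : Real.sqrt b + Real.sqrt (D - 1) * Real.sqrt (1 - b) ≤
      Real.sqrt a + Real.sqrt (D - 1) * Real.sqrt (1 - a) := by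
    set s := Real.sqrt (1 - a) + Real.sqrt (1 - b) with hs
    rcases eq_or_lt_of_le (by positivity : (0:ℝ) ≤ s) with hs0 | hs0
    · -- s = 0 ⇒ a = b = 1
      have h1 : Real.sqrt (1 - a) = 0 ∧ Real.sqrt (1 - b) = 0 := by
        constructor <;> nlinarith [Real.sqrt_nonneg (1 - a), Real.sqrt_nonneg (1 - b)]
      have ha' : a = 1 := by
        have := Real.sqrt_eq_zero h1a |>.mp h1.1
        linarith
      have hb' : b = 1 := by
        have := Real.sqrt_eq_zero h1b |>.mp h1.2
        linarith
      rw [ha', hb']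
    · have hsa : Real.sqrt b - Real.sqrt a ≥ 0 := by
        simpa using Real.sqrt_le_sqrt hab
      have hkey : s ≤ Real.sqrt (D - 1) * (Real.sqrt a + Real.sqrt b) := by
        have := key a ha1 ha2
        have := key b hb1 hb2
        rw [hs]; nlinarith
      have e1 : (Real.sqrt b - Real.sqrt a) * (Real.sqrt a + Real.sqrt b) = b - a := by
        have := Real.sq_sqrt ha0
        have := Real.sq_sqrt hb0
        nlinarith
      have e2 : (Real.sqrt (1 - a) - Real.sqrt (1 - b)) * s = b - a := by
        have := Real.sq_sqrt h1a
        have := Real.sq_sqrt h1b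
        rw [hs]; nlinarith
      have step : (Real.sqrt b - Real.sqrt a) * s ≤
          Real.sqrt (D - 1) * ((Real.sqrt (1 - a) - Real.sqrt (1 - b)) * s) := by
        calc (Real.sqrt b - Real.sqrt a) * s
            ≤ (Real.sqrt b - Real.sqrt a) * (Real.sqrt (D - 1) * (Real.sqrt a + Real.sqrt b)) :=
              mul_le_mul_of_nonneg_left hkey hsa
          _ = Real.sqrt (D - 1) * ((Real.sqrt b - Real.sqrt a) * (Real.sqrt a + Real.sqrt b)) := by
              ring
          _ = Real.sqrt (D - 1) * ((Real.sqrt (1 - a) - Real.sqrt (1 - b)) * s) := by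
              rw [e1, e2]
      have := (mul_le_mul_iff_of_pos_right hs0).mp (by linarith [step] :
        (Real.sqrt b - Real.sqrt a) * s ≤
          (Real.sqrt (D - 1) * (Real.sqrt (1 - a) - Real.sqrt (1 - b))) * s)
      linarith
  have hgb0 : 0 ≤ Real.sqrt b + Real.sqrt (D - 1) * Real.sqrt (1 - b) := by positivity
  have hsq : (Real.sqrt b + Real.sqrt (D - 1) * Real.sqrt (1 - b))^2 ≤
      (Real.sqrt a + Real.sqrt (D - 1) * Real.sqrt (1 - a))^2 := by
    apply pow_le_pow_left₀ hgb0 hg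
  exact div_le_div_of_nonneg_right hsq hD0.le
end

section
/- With S = 2/d − 1 + ((1−2W)/d)·√((d−1)/(W(1−W))) and λ₋ = −(d−1)/d − (W/d)·√((d−1)/(W(1−W))), the dual objective −λ₋ + S·W equals (√W + √((d−1)(1−W)))²/d, for all W ∈ (0,1) and integers d ≥ 2. -/
/-- With S = 2/d − 1 + ((1−2W)/d)√((d−1)/(W(1−W))) and
λ₋ = −(d−1)/d − (W/d)√((d−1)/(W(1−W))), the dual objective −λ₋ + S·W equals
(√W + √((d−1)(1−W)))²/d, for all W ∈ (0,1) and integers d ≥ 2. -/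
theorem stmt_5 (d : ℕ) (hd : 2 ≤ d) (W : ℝ) (hW0 : 0 < W) (hW1 : W < 1) :
    -(-(((d : ℝ) - 1) / d) - (W / d) * Real.sqrt (((d : ℝ) - 1) / (W * (1 - W)))) +
        (2 / (d : ℝ) - 1 + ((1 - 2 * W) / d) * Real.sqrt (((d : ℝ) - 1) / (W * (1 - W)))) * W =
      (Real.sqrt W + Real.sqrt (((d : ℝ) - 1) * (1 - W)))^2 / d := by
  have hd1 : (0:ℝ) ≤ (d:ℝ) - 1 := by
    have : (2:ℝ) ≤ (d:ℝ) := by exact_mod_cast hd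
    linarith
  have hdpos : (0:ℝ) < (d:ℝ) := by
    have : (2:ℝ) ≤ (d:ℝ) := by exact_mod_cast hd
    linarith
  have h1W : (0:ℝ) < 1 - W := by linarith
  have ha : (0:ℝ) < W * (1 - W) := mul_pos hW0 h1W
  have hsq1 : Real.sqrt ((d:ℝ) - 1) / Real.sqrt (W * (1 - W)) =
      Real.sqrt (((d:ℝ) - 1) / (W * (1 - W))) := (Real.sqrt_div hd1 _).symm
  have hsa : Real.sqrt (W * (1 - W)) = Real.sqrt W * Real.sqrt (1 - W) :=
    Real.sqrt_mul hW0.le _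
  have hsb : Real.sqrt (((d:ℝ) - 1) * (1 - W)) = Real.sqrt ((d:ℝ) - 1) * Real.sqrt (1 - W) :=
    Real.sqrt_mul hd1 _
  set sW := Real.sqrt W with hsW
  set s1 := Real.sqrt (1 - W) with hs1
  set sd := Real.sqrt ((d:ℝ) - 1) with hsd
  have hsW2 : sW ^ 2 = W := Real.sq_sqrt hW0.le
  have hs12 : s1 ^ 2 = 1 - W := Real.sq_sqrt h1W.le
  have hsd2 : sd ^ 2 = (d:ℝ) - 1 := Real.sq_sqrt hd1
  have hsWpos : 0 < sW := Real.sqrt_pos.mpr hW0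
  have hs1pos : 0 < s1 := Real.sqrt_pos.mpr h1W
  rw [← hsq1, hsa, hsb]
  field_simp
  linear_combination (-sW * s1 - 2 * sd * s1^2) * hsW2 +
    (-2 * sd * W - ((d:ℝ)-1) * sW * s1) * hs12 +
    (-sW * s1^3) * hsd2
end
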